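/- arXiv:2005.03880 — 2 statements merged into one kernel-verified Lean document; each statement's English description precedes it below -/
import Mathlib

section
/- Fix integers n ≥ 3, k ≥ 2, s > 0 and, for 1 ≤ i ≤ s, integers d_i, g_i with d_i > g_i ≥ 0. If Σ_{i=1}^{s} (k·d_i + 1 − g_i) ≤ C(n+k, n), then Σ_{i=1}^{s} ((k+1)·d_i + 1 − g_i) < C(n+k+1, n). -/
/-- **Lemma (arithmetic).** Fix integers `n ≥ 3`, `k ≥ 2`, `s > 0` and, for `1 ≤ i ≤ s`,
integers `dᵢ, gᵢ` with `dᵢ > gᵢ ≥ 0`. If `∑ᵢ (k dᵢ + 1 − gᵢ) ≤ C(n+k, n)`, then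
`∑ᵢ ((k+1) dᵢ + 1 − gᵢ) < C(n+k+1, n)`. -/
theorem sum_lt_choose_succ_of_sum_le_choose
    (n k s : ℕ) (hn : 3 ≤ n) (hk : 2 ≤ k) (hs : 0 < s)
    (d g : Fin s → ℕ) (hdg : ∀ i, g i < d i)
    (h : ∑ i, ((k : ℤ) * (d i : ℤ) + 1 - (g i : ℤ)) ≤ ((n + k).choose n : ℤ)) :
    ∑ i, (((k : ℤ) + 1) * (d i : ℤ) + 1 - (g i : ℤ)) < ((n + k + 1).choose n : ℤ) := by
  obtain ⟨m, rfl⟩ : ∃ m, n = m + 1 := ⟨n - 1, by omega⟩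
  set C : ℤ := ((m + 1 + k).choose (m + 1) : ℤ) with hC
  set D : ℤ := ((m + 1 + k).choose m : ℤ) with hD
  set S : ℤ := ∑ i, ((k : ℤ) * (d i : ℤ) + 1 - (g i : ℤ)) with hS
  set T : ℤ := ∑ i, (d i : ℤ) with hT
  -- Pascal
  have pascal : ((m + 1 + k + 1).choose (m + 1) : ℤ) = D + C := by
    have : (m + 1 + k + 1).choose (m + 1) = (m + 1 + k).choose m + (m + 1 + k).choose (m + 1) :=
      Nat.choose_succ_succ _ _
    push_cast [this]; ring
  -- identity: C * (m+1) = D * (k+1)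
  have hid : C * ((m : ℤ) + 1) = D * ((k : ℤ) + 1) := by
    have := Nat.choose_succ_right_eq (m + 1 + k) m
    have h2 : m + 1 + k - m = k + 1 := by omega
    rw [h2] at this
    rw [hC, hD]
    exact_mod_cast congrArg (Nat.cast : ℕ → ℤ) this
  -- lower bound on terms
  have hlow : ((k : ℤ) - 1) * T + 2 * s ≤ S := by
    have : ∀ i : Fin s, ((k : ℤ) - 1) * (d i : ℤ) + 2 ≤ (k : ℤ) * (d i : ℤ) + 1 - (g i : ℤ) := by
      intro i
      have h1 : (g i : ℤ) + 1 ≤ (d i : ℤ) := by exact_mod_cast hdg i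
      nlinarith
    calc ((k : ℤ) - 1) * T + 2 * s = ∑ i : Fin s, (((k : ℤ) - 1) * (d i : ℤ) + 2) := by
          simp [hT, Finset.mul_sum, Finset.sum_add_distrib, mul_comm]
      _ ≤ S := Finset.sum_le_sum fun i _ => this i
  have hCpos : (1 : ℤ) ≤ C := by
    have := Nat.choose_pos (show m + 1 ≤ m + 1 + k by omega)
    rw [hC]; exact_mod_cast this
  have hs' : (1 : ℤ) ≤ (s : ℤ) := by exact_mod_cast hs
  have hk' : (2 : ℤ) ≤ (k : ℤ) := by exact_mod_cast hk
  have hm' : (2 : ℤ) ≤ (m : ℤ) := by exact_mod_cast (by omega : 2 ≤ m)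
  -- (k-1)T ≤ C - 2
  have h1 : ((k : ℤ) - 1) * T ≤ C - 2 := by linarith
  -- T < D
  have hTD : T < D := by
    have key : ((k : ℤ) + 1) * (((k : ℤ) - 1) * T) < ((k : ℤ) - 1) * (((k : ℤ) + 1) * D) := by
      have e1 : ((k : ℤ) + 1) * (((k : ℤ) - 1) * T) ≤ ((k : ℤ) + 1) * (C - 2) := by
        apply mul_le_mul_of_nonneg_left h1; linarith
      have e2 : ((k : ℤ) + 1) * (C - 2) < ((k : ℤ) + 1) * C := by nlinarith
      have hcoef : (k : ℤ) + 1 ≤ ((m : ℤ) + 1) * ((k : ℤ) - 1) := by nlinarith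
      have e3 : ((k : ℤ) + 1) * C ≤ ((m : ℤ) + 1) * (((k : ℤ) - 1) * C) := by
        have := mul_le_mul_of_nonneg_right hcoef (by linarith : (0:ℤ) ≤ C)
        linarith [this.trans_eq (by ring : ((m : ℤ) + 1) * ((k : ℤ) - 1) * C = ((m : ℤ) + 1) * (((k : ℤ) - 1) * C))]
      have e4 : ((m : ℤ) + 1) * (((k : ℤ) - 1) * C) = ((k : ℤ) - 1) * (((k : ℤ) + 1) * D) := by
        nlinarith [hid]
      linarith
    nlinarith
  have hgoal : ∑ i, (((k : ℤ) + 1) * (d i : ℤ) + 1 - (g i : ℤ)) = S + T := by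
    rw [hS, hT, ← Finset.sum_add_distrib]; apply Finset.sum_congr rfl; intros; ring
  rw [hgoal, pascal]
  linarith
end

section
/- Fix a scheme A ∪ B ⊂ ℙ^n, n ≥ 3, with dim A ≤ n − 2, B an integral and non-degenerate curve, and A not intersecting a general secant line L of B. Then h^0(I_{A ∪ B ∪ L}(2)) = max{0, h^0(I_{A ∪ B}(2)) − 1}. -/
/-!
We work over an algebraically closed field `K` of characteristic zero and describe closed
subvarieties of `ℙ^n_K` through their affine cones inside `V = K^{n+1}` (so a point of
`ℙ^n` is a line through the origin, a line of `ℙ^n` is a plane through the origin, and the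
affine cone over a curve has Krull dimension `2`).
-/

open MvPolynomial

set_option maxHeartbeats 1000000
set_option synthInstance.maxHeartbeats 400000

variable (K : Type) [Field K] [IsAlgClosed K] [CharZero K]

/-- A point of affine space `σ → K`, viewed as a point of the prime spectrum of the
polynomial ring (the kernel of the evaluation map at that point). -/
noncomputable def evalPoint (σ : Type) (x : σ → K) : PrimeSpectrum (MvPolynomial σ K) :=
  ⟨RingHom.ker (MvPolynomial.aeval x), RingHom.ker_isPrime _⟩

/-- The Zariski topology on affine space `σ → K`, induced from the prime spectrum of the
polynomial ring; its closed sets are exactly the algebraic subsets. -/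
noncomputable def zariski (σ : Type) : TopologicalSpace (σ → K) :=
  TopologicalSpace.induced (evalPoint K σ) inferInstance

/-- The Zariski topology on a product of two affine spaces. -/
noncomputable def zariskiProd (σ : Type) : TopologicalSpace ((σ → K) × (σ → K)) :=
  TopologicalSpace.induced (fun p => Sum.elim p.1 p.2) (zariski K (σ ⊕ σ))

/-- The Zariski topology on a subset of affine space. -/
noncomputable def zariskiSub (σ : Type) (S : Set (σ → K)) : TopologicalSpace S :=
  TopologicalSpace.induced Subtype.val (zariski K σ)

/-- The (Krull) dimension of a subset of affine space, for its Zariski topology.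
The affine cone over a projective variety of dimension `r` has dimension `r + 1`. -/
noncomputable def coneDim (σ : Type) (S : Set (σ → K)) : WithBot ℕ∞ :=
  @topologicalKrullDim S (zariskiSub K σ S)

/-- `S ⊆ V` is a cone, i.e. comes from a subset of `ℙ(V)`. -/
def IsProjCone (σ : Type) (S : Set (σ → K)) : Prop := ∀ (c : K), ∀ x ∈ S, c • x ∈ S

/-- The space of homogeneous forms of degree `t` on `ℙ^n` vanishing on (the cone) `S`,
i.e. `H⁰(ℐ_S(t))` for the reduced subscheme `S`. -/
noncomputable def formsVanishingOn (σ : Type) (t : ℕ) (S : Set (σ → K)) :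
    Submodule K (MvPolynomial σ K) :=
  (homogeneousSubmodule σ K t) ⊓ ⨅ x ∈ S, LinearMap.ker (MvPolynomial.aeval x).toLinearMap

/-- `h⁰(ℐ_S(t))` for a reduced closed subscheme of `ℙ^n` with affine cone `S ⊆ K^{n+1}`. -/
noncomputable def h0I (n t : ℕ) (S : Set (Fin (n + 1) → K)) : ℕ :=
  Module.finrank K (formsVanishingOn K (Fin (n + 1)) t S)

section Helpers

set_option linter.unusedSectionVars false

lemma finsupp_degree_step {σ : Type} (d : σ →₀ ℕ) (m : ℕ)
    (hd : Finsupp.degree d = m + 1) :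
    ∃ (i : σ) (e : σ →₀ ℕ), d = Finsupp.single i 1 + e ∧ Finsupp.degree e = m := by
  classical
  have hne : d ≠ 0 := by
    rintro rfl; simp [map_zero] at hd
  obtain ⟨i, hi⟩ := Finsupp.support_nonempty_iff.mpr hne
  have hdi : 1 ≤ d i := Nat.one_le_iff_ne_zero.mpr (Finsupp.mem_support_iff.mp hi)
  refine ⟨i, d - Finsupp.single i 1, ?_, ?_⟩
  · ext j
    by_cases h : j = i
    · subst h
      simp only [Finsupp.add_apply, Finsupp.tsub_apply, Finsupp.single_eq_same]
      omega
    · simp [Finsupp.single_eq_of_ne' (Ne.symm h), Finsupp.tsub_apply]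
  · have h1 : d = Finsupp.single i 1 + (d - Finsupp.single i 1) := by
      ext j
      by_cases h : j = i
      · subst h
        simp only [Finsupp.add_apply, Finsupp.tsub_apply, Finsupp.single_eq_same]
        omega
      · simp [Finsupp.single_eq_of_ne' (Ne.symm h), Finsupp.tsub_apply]
    have h2 : Finsupp.degree d
        = Finsupp.degree (Finsupp.single i 1) + Finsupp.degree (d - Finsupp.single i 1) := by
      conv_lhs => rw [h1]
      rw [Finsupp.degree_eq_weight_one]
      exact map_add _ _ _
    have h3 : Finsupp.degree (Finsupp.single i 1) = 1 := by
      exact Finsupp.degree_single i 1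
    omega

lemma finsupp_degree_two {σ : Type} (d : σ →₀ ℕ) (hd : Finsupp.degree d = 2) :
    ∃ i j, d = Finsupp.single i 1 + Finsupp.single j 1 := by
  obtain ⟨i, e, rfl, he⟩ := finsupp_degree_step d 1 hd
  obtain ⟨j, e', rfl, he'⟩ := finsupp_degree_step e 0 he
  have : e' = 0 := by
    rwa [Finsupp.degree_eq_zero_iff] at he'
  exact ⟨i, j, by rw [this, add_zero]⟩

lemma monomial_two_eq {σ : Type} (i j : σ) (c : K) :
    (monomial (Finsupp.single i 1 + Finsupp.single j 1) c : MvPolynomial σ K)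
      = C c * (X i * X j) := by
  rw [X, X, monomial_mul, one_mul, C_mul_monomial, mul_one]

lemma aeval_key {σ : Type} {f : MvPolynomial σ K} (hf : f.IsHomogeneous 2)
    (x y : σ → K) (a b : K) :
    aeval (a • x + b • y) f =
      a ^ 2 * aeval x f + a * b * (aeval (x + y) f - aeval x f - aeval y f)
        + b ^ 2 * aeval y f := by
  have hrep : f = ∑ d ∈ f.support, monomial d (f.coeff d) :=
    (support_sum_monomial_coeff f).symm
  rw [hrep]
  simp only [map_sum]
  rw [Finset.mul_sum, ← Finset.sum_sub_distrib, ← Finset.sum_sub_distrib, Finset.mul_sum,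
    Finset.mul_sum, ← Finset.sum_add_distrib, ← Finset.sum_add_distrib]
  refine Finset.sum_congr rfl fun d hd => ?_
  have hdeg : Finsupp.degree d = 2 := by
    rw [Finsupp.degree_eq_weight_one]
    exact hf (mem_support_iff.mp hd)
  obtain ⟨i, j, rfl⟩ := finsupp_degree_two d hdeg
  rw [monomial_two_eq]
  simp only [map_mul, aeval_C, aeval_X, Pi.add_apply, Pi.smul_apply, smul_eq_mul,
    Algebra.algebraMap_self, RingHom.id_apply]
  ring

lemma aeval_key3 {σ : Type} {f : MvPolynomial σ K} (hf : f.IsHomogeneous 2)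
    (x y z : σ → K) :
    aeval (x + y + z) f + aeval x f + aeval y f + aeval z f =
      aeval (x + y) f + aeval (x + z) f + aeval (y + z) f := by
  have hrep : f = ∑ d ∈ f.support, monomial d (f.coeff d) :=
    (support_sum_monomial_coeff f).symm
  rw [hrep]
  simp only [map_sum]
  rw [← Finset.sum_add_distrib, ← Finset.sum_add_distrib, ← Finset.sum_add_distrib,
    ← Finset.sum_add_distrib, ← Finset.sum_add_distrib]
  refine Finset.sum_congr rfl fun d hd => ?_
  have hdeg : Finsupp.degree d = 2 := by
    rw [Finsupp.degree_eq_weight_one]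
    exact hf (mem_support_iff.mp hd)
  obtain ⟨i, j, rfl⟩ := finsupp_degree_two d hdeg
  rw [monomial_two_eq]
  simp only [map_mul, aeval_C, aeval_X, Pi.add_apply, Algebra.algebraMap_self, RingHom.id_apply]
  ring

lemma aeval_smul_sq {σ : Type} {f : MvPolynomial σ K} (hf : f.IsHomogeneous 2)
    (x : σ → K) (a : K) : aeval (a • x) f = a ^ 2 * aeval x f := by
  have := aeval_key K hf x x a 0
  simpa using this

lemma aeval_zero_pt {σ : Type} {f : MvPolynomial σ K} (hf : f.IsHomogeneous 2) :
    aeval (0 : σ → K) f = 0 := by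
  have := aeval_smul_sq K hf 0 (0 : K)
  simpa using this

lemma polar_add_left {σ : Type} {f : MvPolynomial σ K} (hf : f.IsHomogeneous 2)
    (x y z : σ → K) :
    aeval (x + y + z) f - aeval (x + y) f - aeval z f =
      (aeval (x + z) f - aeval x f - aeval z f)
        + (aeval (y + z) f - aeval y f - aeval z f) := by
  have := aeval_key3 K hf x y z
  linear_combination this

lemma polar_smul_left {σ : Type} {f : MvPolynomial σ K} (hf : f.IsHomogeneous 2)
    (x z : σ → K) (a : K) :
    aeval (a • x + z) f - aeval (a • x) f - aeval z f =
      a * (aeval (x + z) f - aeval x f - aeval z f) := by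
  have h1 := aeval_key K hf x z a 1
  have h2 := aeval_smul_sq K hf x a
  rw [one_smul] at h1
  rw [h1, h2]
  ring

lemma eq_zero_of_polar_vanish {σ : Type} {f : MvPolynomial σ K}
    (hf : f.IsHomogeneous 2) (B : Set (σ → K)) (hspan : Submodule.span K B = ⊤)
    (hB : ∀ x ∈ B, aeval x f = 0) (hBB : ∀ p ∈ B, ∀ q ∈ B, aeval (p + q) f = 0) :
    f = 0 := by
  have hsymm : ∀ x y : σ → K,
      aeval (x + y) f - aeval x f - aeval y f
        = aeval (y + x) f - aeval y f - aeval x f := by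
    intro x y; rw [add_comm x y]; ring
  have hpolar : ∀ x y : σ → K, aeval (x + y) f - aeval x f - aeval y f = 0 := by
    intro x y
    have hx : x ∈ Submodule.span K B := by rw [hspan]; trivial
    have hy : y ∈ Submodule.span K B := by rw [hspan]; trivial
    induction hx, hy using Submodule.span_induction₂ with
    | mem_mem p q hp hq => rw [hBB p hp q hq, hB p hp, hB q hq]; ring
    | zero_left y hy => simp [aeval_zero_pt K hf]
    | zero_right x hx => simp [aeval_zero_pt K hf]
    | add_left x y z hx hy hz h1 h2 =>
        have e1 := polar_add_left K hf x y z
        linear_combination e1 + h1 + h2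
    | add_right x y z hx hy hz h1 h2 =>
        have e1 := polar_add_left K hf y z x
        have a1 : y + x = x + y := by abel
        have a2 : z + x = x + z := by abel
        have a3 : y + z + x = x + (y + z) := by abel
        rw [a1, a2, a3] at e1
        linear_combination e1 + h1 + h2
    | smul_left a x y hx hy h =>
        have := polar_smul_left K hf x y a; rw [h] at this; simpa using this
    | smul_right a x y hx hy h =>
        have e1 := polar_smul_left K hf y x a
        have a1 : y + x = x + y := by abel
        have a2 : a • y + x = x + a • y := by abel
        rw [a1, a2] at e1
        linear_combination e1 + a * h
  have hall : ∀ x : σ → K, aeval x f = 0 := by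
    intro x
    have h1 := hpolar x x
    have h2 : x + x = (2 : K) • x := (two_smul K x).symm
    rw [h2, aeval_smul_sq K hf] at h1
    have h3 : (2 : K) ^ 2 * aeval x f - aeval x f - aeval x f = 2 * aeval x f := by ring
    rw [h3] at h1
    exact (mul_eq_zero.mp h1).resolve_left two_ne_zero
  apply MvPolynomial.funext
  intro x
  have : MvPolynomial.eval x f = aeval x f := by
    rw [MvPolynomial.aeval_def, MvPolynomial.eval]
    simp [Algebra.algebraMap_self]
  simp [this, hall x]

lemma mem_formsVanishingOn {σ : Type} {t : ℕ} {S : Set (σ → K)} {f : MvPolynomial σ K} :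
    f ∈ formsVanishingOn K σ t S ↔ f.IsHomogeneous t ∧ ∀ x ∈ S, aeval x f = 0 := by
  simp [formsVanishingOn, Submodule.mem_inf, Submodule.mem_iInf, mem_homogeneousSubmodule,
    LinearMap.mem_ker]

lemma formsVanishingOn_mono {σ : Type} {t : ℕ} {S S' : Set (σ → K)} (h : S ⊆ S') :
    formsVanishingOn K σ t S' ≤ formsVanishingOn K σ t S := by
  intro f hf
  rw [mem_formsVanishingOn] at hf ⊢
  exact ⟨hf.1, fun x hx => hf.2 x (h hx)⟩

lemma formsVanishingOn_fd (σ : Type) [Finite σ] (t : ℕ) (S : Set (σ → K)) :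
    FiniteDimensional K (formsVanishingOn K σ t S) := by
  have hle : formsVanishingOn K σ t S ≤ restrictTotalDegree σ K t := by
    intro f hf
    rw [mem_formsVanishingOn] at hf
    rw [mem_restrictTotalDegree]
    exact hf.1.totalDegree_le
  exact Submodule.finiteDimensional_of_le hle

lemma isOpen_pairSet (σ : Type) (f : MvPolynomial σ K) :
    @IsOpen _ (zariskiProd K σ) {z : (σ → K) × (σ → K) | aeval (z.1 + z.2) f ≠ 0} := by
  classical
  set v : σ → MvPolynomial (σ ⊕ σ) K := fun i => X (Sum.inl i) + X (Sum.inr i) with hv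
  set G : MvPolynomial (σ ⊕ σ) K := aeval v f with hG
  have hval : ∀ w : σ ⊕ σ → K,
      aeval w G = aeval (fun i => w (Sum.inl i) + w (Sum.inr i)) f := by
    intro w
    have : aeval w G = ((aeval w).comp (aeval v)) f := rfl
    rw [this, MvPolynomial.comp_aeval]
    simp [hv]
  unfold zariskiProd
  rw [@isOpen_induced_iff _ _ (zariski K (σ ⊕ σ)) _ _]
  refine ⟨evalPoint K (σ ⊕ σ) ⁻¹' (PrimeSpectrum.basicOpen G : Set _), ?_, ?_⟩
  · unfold zariski
    rw [@isOpen_induced_iff _ _ _ _ _]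
    exact ⟨(PrimeSpectrum.basicOpen G : Set _), (PrimeSpectrum.basicOpen G).2, rfl⟩
  · ext z
    have harg : (fun i => Sum.elim z.1 z.2 (Sum.inl i) + Sum.elim z.1 z.2 (Sum.inr i))
        = z.1 + z.2 := by
      funext i; simp
    simp only [Set.mem_preimage, SetLike.mem_coe, PrimeSpectrum.basicOpen_eq_zeroLocus_compl,
      Set.mem_compl_iff, PrimeSpectrum.mem_zeroLocus, Set.singleton_subset_iff,
      Set.mem_setOf_eq]
    constructor
    · intro h
      have hne : aeval (Sum.elim z.1 z.2) G ≠ 0 := by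
        intro h0
        exact h (by simpa [evalPoint, RingHom.mem_ker] using h0)
      rw [hval, harg] at hne
      exact hne
    · intro h h0
      have h1 : aeval (Sum.elim z.1 z.2) G = 0 := by
        simpa [evalPoint, RingHom.mem_ker] using h0
      rw [hval, harg] at h1
      exact h h1

end Helpers

/-- **Lemma (Ballico, Lemma `k+2`).** Fix a scheme `A ∪ B ⊆ ℙ^n`, `n ≥ 3`, with
`dim A ≤ n − 2` (affine cone of dimension `≤ n − 1`), `B` an integral (irreducible and
reduced) non-degenerate curve, and `A` not intersecting a general secant line `L` of `B`.
Then `h⁰(ℐ_{A ∪ B ∪ L}(2)) = max {0, h⁰(ℐ_{A ∪ B}(2)) − 1}` (truncated subtraction in ℕ).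

"General secant line" is formalized by: there is a Zariski open set `U` of pairs meeting
`B × B` such that the conclusion holds for the line spanned by any pair of (projectively)
distinct points of `B` lying in `U`. -/
theorem h0_quadrics_through_union_with_general_secant_line
    (n : ℕ) (hn : 3 ≤ n)
    (A B : Set (Fin (n + 1) → K))
    (hAcone : IsProjCone K _ A) (hBcone : IsProjCone K _ B)
    (hAclosed : @IsClosed _ (zariski K _) A) (hBclosed : @IsClosed _ (zariski K _) B)
    (hAdim : coneDim K _ A ≤ ((n - 1 : ℕ) : WithBot ℕ∞))
    (hBirr : @IsIrreducible _ (zariski K _) B)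
    (hBdim : coneDim K _ B = 2)
    (hBnondeg : Submodule.span K B = ⊤) :
    ∃ U : Set ((Fin (n + 1) → K) × (Fin (n + 1) → K)),
      @IsOpen _ (zariskiProd K _) U ∧ ((B ×ˢ B) ∩ U).Nonempty ∧
      ∀ p q : Fin (n + 1) → K, p ∈ B → q ∈ B → (p, q) ∈ U →
        LinearIndependent K ![p, q] →
        A ∩ (Submodule.span K {p, q} : Set (Fin (n + 1) → K)) ⊆ {0} →
        h0I K n 2 (A ∪ B ∪ (Submodule.span K {p, q} : Set (Fin (n + 1) → K))) =
          h0I K n 2 (A ∪ B) - 1 := by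
  
  classical
  haveI fdW : FiniteDimensional K (formsVanishingOn K (Fin (n + 1)) 2 (A ∪ B)) :=
    formsVanishingOn_fd K _ 2 _
  by_cases hW0 : h0I K n 2 (A ∪ B) = 0
  · -- the space of quadrics through `A ∪ B` is already zero
    obtain ⟨b, hb⟩ := hBirr.1
    refine ⟨Set.univ, @isOpen_univ _ (zariskiProd K _), ⟨(b, b), ⟨hb, hb⟩, trivial⟩, ?_⟩
    intro p q hp hq _ _ _
    have hbot : formsVanishingOn K (Fin (n + 1)) 2 (A ∪ B) = ⊥ := by
      unfold h0I at hW0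
      exact Submodule.finrank_eq_zero.mp hW0
    have hbot' : formsVanishingOn K (Fin (n + 1)) 2
        (A ∪ B ∪ (Submodule.span K {p, q} : Set (Fin (n + 1) → K))) = ⊥ := by
      refine le_bot_iff.mp ?_
      rw [← hbot]
      exact formsVanishingOn_mono K Set.subset_union_left
    unfold h0I
    rw [hbot', finrank_bot]
    unfold h0I at hW0
    omega
  · set W := formsVanishingOn K (Fin (n + 1)) 2 (A ∪ B) with hWdef
    have hWne : ∃ f ∈ W, f ≠ 0 := by
      by_contra h
      push_neg at h
      have hbot : W = ⊥ := (Submodule.eq_bot_iff W).mpr h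
      apply hW0
      unfold h0I
      rw [← hWdef, hbot, finrank_bot]
    refine ⟨⋃ f ∈ (W : Set (MvPolynomial (Fin (n + 1)) K)),
      {z : (Fin (n + 1) → K) × (Fin (n + 1) → K) | aeval (z.1 + z.2) f ≠ 0}, ?_, ?_, ?_⟩
    · exact @isOpen_biUnion _ _ (zariskiProd K _) _ _ fun f _ => isOpen_pairSet K _ f
    · obtain ⟨f, hfW, hfne⟩ := hWne
      by_contra hcon
      rw [Set.not_nonempty_iff_eq_empty] at hcon
      have hBB : ∀ p ∈ B, ∀ q ∈ B, aeval (p + q) f = 0 := by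
        intro p hp q hq
        by_contra hne
        have hmem : (p, q) ∈ (B ×ˢ B) ∩ ⋃ f ∈ (W : Set (MvPolynomial (Fin (n + 1)) K)),
            {z : (Fin (n + 1) → K) × (Fin (n + 1) → K) | aeval (z.1 + z.2) f ≠ 0} :=
          ⟨⟨hp, hq⟩, Set.mem_biUnion hfW hne⟩
        rw [hcon] at hmem
        exact hmem
      obtain ⟨hfh, hfv⟩ := (mem_formsVanishingOn K).mp hfW
      exact hfne (eq_zero_of_polar_vanish K hfh B hBnondeg
        (fun x hx => hfv x (Or.inr hx)) hBB)
    · intro p q hp hq hU _ _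
      set W' := formsVanishingOn K (Fin (n + 1)) 2
        (A ∪ B ∪ (Submodule.span K {p, q} : Set (Fin (n + 1) → K))) with hW'def
      have hle : W' ≤ W := formsVanishingOn_mono K Set.subset_union_left
      set φ : W →ₗ[K] K :=
        ((MvPolynomial.aeval (p + q) : MvPolynomial (Fin (n + 1)) K →ₐ[K] K).toLinearMap).comp
          W.subtype with hφdef
      have hφval : ∀ f : W, φ f = aeval (p + q) (f : MvPolynomial (Fin (n + 1)) K) := by
        intro f; rfl
      have hker : LinearMap.ker φ = W'.comap W.subtype := by
        ext f
        obtain ⟨hfh, hfv⟩ := (mem_formsVanishingOn K).mp f.2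
        simp only [LinearMap.mem_ker, Submodule.mem_comap, Submodule.coe_subtype, hφval]
        constructor
        · intro h0
          rw [hW'def, mem_formsVanishingOn]
          refine ⟨hfh, fun x hx => ?_⟩
          rcases hx with hx | hx
          · exact hfv x hx
          · obtain ⟨a, b, rfl⟩ := Submodule.mem_span_pair.mp hx
            rw [aeval_key K hfh p q a b, hfv p (Or.inr hp), hfv q (Or.inr hq), h0]
            ring
        · intro h
          have hpq : p + q ∈ (Submodule.span K {p, q} : Set (Fin (n + 1) → K)) :=
            Submodule.add_mem _ (Submodule.subset_span (by simp))
              (Submodule.subset_span (by simp))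
          exact ((mem_formsVanishingOn K).mp h).2 (p + q) (Or.inr hpq)
      have hsurj : Function.Surjective φ := by
        have hU' : ∃ f ∈ W, aeval (p + q) f ≠ 0 := by
          simp only [Set.mem_iUnion, Set.mem_setOf_eq, SetLike.mem_coe] at hU
          obtain ⟨f, hf, hne⟩ := hU
          exact ⟨f, hf, hne⟩
        obtain ⟨f, hfW2, hfne⟩ := hU'
        intro c
        refine ⟨(c * (aeval (p + q) f)⁻¹) • ⟨f, hfW2⟩, ?_⟩
        rw [map_smul, hφval]
        simp only [smul_eq_mul]
        field_simp
      have hrank := LinearMap.finrank_range_add_finrank_ker φ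
      have hr1 : Module.finrank K (LinearMap.range φ) = 1 := by
        rw [LinearMap.range_eq_top.mpr hsurj, finrank_top, Module.finrank_self]
      have hk : Module.finrank K (LinearMap.ker φ) = Module.finrank K W' := by
        rw [hker]
        exact (Submodule.comapSubtypeEquivOfLe hle).finrank_eq
      have hW0' : h0I K n 2 (A ∪ B) = Module.finrank K W := rfl
      have hW1' : h0I K n 2
          (A ∪ B ∪ (Submodule.span K {p, q} : Set (Fin (n + 1) → K)))
            = Module.finrank K W' := rfl
      rw [hW0'] at hW0 ⊢
      rw [hW1']
      omega
end
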